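/- Let S and A be finite sets, H a positive integer, d a positive integer. Let ρ : S → ℝ be nonnegative with Σ_{s∈S} ρ(s) = 1, let P : S × S × A → ℝ be nonnegative with Σ_{s'∈S} P(s',s,a) = 1 for all s,a, and let π : ℝ^d × S × A → ℝ be differentiable in θ, strictly positive, with Σ_{a∈A} π(θ,s,a) = 1 for all θ,s. For a trajectory τ = (s_0,a_0,…,s_{H-1},a_{H-1},s_H) set f(θ,τ) = ρ(s_0)·Π_{i=0}^{H-1} π(θ,s_i,a_i)·P(s_{i+1},s_i,a_i). Let R : Finset (S × ℕ) → ℝ be a set function, let τ_{0:j} = {(s_0,0),…,(s_j,j)}, and define the trajectory reward R(τ) = R(τ_{0:H}). Define J(θ) = Σ_τ f(θ,τ)·R(τ). Then for every θ, ∇J(θ) = Σ_τ f(θ,τ) · Σ_{i=0}^{H-1} ∇_θ log π(θ,s_i,a_i) · ( Σ_{j=i}^{H-1} [R(τ_{0:j+1}) − R(τ_{0:j})] + R({(s_0,0)}) ). -/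

import Mathlib

open Finset
open Fin.NatCast

lemma margB {ι X E : Type*} [Fintype ι] [DecidableEq ι] [Fintype X] [Nonempty X]
    [AddCommMonoid E] [Module ℝ E] (j : ι) (g g₀ : (ι → X) → E)
    (h1 : ∀ s, ∑ x : X, g (Function.update s j x) = g₀ s)
    (h2 : ∀ s x, g₀ (Function.update s j x) = g₀ s) :
    (Fintype.card X : ℝ) • ∑ s : ι → X, g s = ∑ s : ι → X, g₀ s := by
  classical
  set e := Equiv.funSplitAt j X with he
  have hupd : ∀ (x x' : X) (r : {k // k ≠ j} → X),
      e.symm (x, r) = Function.update (e.symm (x', r)) j x := by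
    intro x x' r
    funext k
    by_cases h : k = j
    · subst h; simp [he, Equiv.funSplitAt, Equiv.piSplitAt]
    · simp [he, Equiv.funSplitAt, Equiv.piSplitAt, h, Function.update_of_ne h]
  obtain ⟨x₀⟩ := ‹Nonempty X›
  have hg : ∑ s : ι → X, g s = ∑ r : {k // k ≠ j} → X, g₀ (e.symm (x₀, r)) := by
    rw [← e.symm.sum_comp g, Fintype.sum_prod_type, Finset.sum_comm]
    refine Finset.sum_congr rfl fun r _ => ?_
    rw [← h1 (e.symm (x₀, r))]
    refine Finset.sum_congr rfl fun x _ => ?_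
    rw [hupd x x₀ r]
  have hg0 : ∑ s : ι → X, g₀ s
      = (Fintype.card X : ℝ) • ∑ r : {k // k ≠ j} → X, g₀ (e.symm (x₀, r)) := by
    rw [← e.symm.sum_comp g₀, Fintype.sum_prod_type]
    have : ∀ x : X, ∑ r : {k // k ≠ j} → X, g₀ (e.symm (x, r))
        = ∑ r : {k // k ≠ j} → X, g₀ (e.symm (x₀, r)) := by
      intro x
      refine Finset.sum_congr rfl fun r _ => ?_
      rw [hupd x x₀ r, h2]
    simp only [this]
    rw [Finset.sum_const, Finset.card_univ, ← Nat.cast_smul_eq_nsmul ℝ]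
  rw [hg, hg0]

lemma zero_lemma {S A : Type*} [Fintype S] [Fintype A] [Nonempty S] [Nonempty A]
    {H : ℕ} (hH : 0 < H) {E : Type*} [AddCommMonoid E] [Module ℝ E]
    (ρ : S → ℝ) (P : S → S → A → ℝ) (p : S → A → ℝ)
    (hPsum : ∀ s a, ∑ s' : S, P s' s a = 1)
    (hpsum : ∀ s, ∑ a : A, p s a = 1)
    (L : S → A → E)
    (hL : ∀ s, ∑ a : A, p s a • L s a = 0)
    (c : (Fin (H + 1) → S) → ℝ)
    (i : Fin H)
    (hc : ∀ (s : Fin (H + 1) → S) (j : Fin (H + 1)) (x : S),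
      i.val < j.val → c (Function.update s j x) = c s) :
    ∑ s : Fin (H + 1) → S, ∑ a : Fin H → A,
      (ρ (s 0) * ∏ j : Fin H,
          (p (s j.castSucc) (a j) * P (s j.succ) (s j.castSucc) (a j)))
        • (c s • L (s i.castSucc) (a i)) = 0 := by
  classical
  haveI : NeZero H := ⟨hH.ne'⟩
  -- cast facts
  have castS : ∀ (k : ℕ), k ≤ H → ((k : Fin (H + 1)) : ℕ) = k :=
    fun k hk => Fin.val_cast_of_lt (by omega)
  have castA : ∀ (k : ℕ), k < H → ((k : Fin H) : ℕ) = k :=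
    fun k hk => Fin.val_cast_of_lt hk
  have hupdS : ∀ (s : Fin (H + 1) → S) (x : S) (m : ℕ) (j : Fin (H + 1)),
      m ≤ H → j.val ≠ m → Function.update s (m : Fin (H + 1)) x j = s j := by
    intro s x m j hm hj
    apply Function.update_of_ne
    intro h; apply hj; rw [h]; exact castS m hm
  have hupdA : ∀ (a : Fin H → A) (x : A) (m : ℕ) (j : Fin H),
      m < H → j.val ≠ m → Function.update a (m : Fin H) x j = a j := by
    intro a x m j hm hj
    apply Function.update_of_ne
    intro h; apply hj; rw [h]; exact castA m hm
  have hiS : ((i.val : ℕ) : Fin (H + 1)) = i.castSucc := by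
    ext; rw [castS i.val (le_of_lt i.isLt), Fin.coe_castSucc]
  have hiA : ((i.val : ℕ) : Fin H) = i := Fin.cast_val_eq_self i
  set W : (Fin (H + 1) → S) → (Fin H → A) → ℕ → ℝ := fun s a k =>
    p (s (k : Fin (H + 1))) (a (k : Fin H))
      * P (s ((k + 1 : ℕ) : Fin (H + 1))) (s (k : Fin (H + 1))) (a (k : Fin H)) with hWdef
  set C : (Fin (H + 1) → S) → (Fin H → A) → E :=
    fun s a => c s • L (s i.castSucc) (a i) with hCdef
  set F : ℕ → E := fun n => ∑ s : Fin (H + 1) → S, ∑ a : Fin H → A,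
    (ρ (s 0) * ∏ k ∈ Finset.range n, W s a k) • C s a with hFdef
  -- invariance of the prefix product and C under updates at high indices
  have hprodS : ∀ (s : Fin (H + 1) → S) (a : Fin H → A) (x : S) (m n : ℕ),
      n < m → m ≤ H →
      ∏ k ∈ Finset.range n, W (Function.update s (m : Fin (H + 1)) x) a k
        = ∏ k ∈ Finset.range n, W s a k := by
    intro s a x m n hnm hm
    refine Finset.prod_congr rfl fun k hk => ?_
    have hk' : k < n := Finset.mem_range.mp hk
    simp only [hWdef]
    rw [hupdS s x m ((k : ℕ) : Fin (H + 1)) hm (by rw [castS k (by omega)]; omega),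
        hupdS s x m (((k + 1 : ℕ)) : Fin (H + 1)) hm (by rw [castS (k + 1) (by omega)]; omega)]
  have hprodA : ∀ (s : Fin (H + 1) → S) (a : Fin H → A) (x : A) (m n : ℕ),
      n ≤ m → m < H →
      ∏ k ∈ Finset.range n, W s (Function.update a (m : Fin H) x) k
        = ∏ k ∈ Finset.range n, W s a k := by
    intro s a x m n hnm hm
    refine Finset.prod_congr rfl fun k hk => ?_
    have hk' : k < n := Finset.mem_range.mp hk
    simp only [hWdef]
    rw [hupdA a x m ((k : ℕ) : Fin H) hm (by rw [castA k (by omega)]; omega)]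
  have hCS : ∀ (s : Fin (H + 1) → S) (a : Fin H → A) (x : S) (m : ℕ),
      i.val < m → m ≤ H →
      C (Function.update s (m : Fin (H + 1)) x) a = C s a := by
    intro s a x m him hm
    simp only [hCdef]
    rw [hc s _ x (by rw [castS m hm]; omega),
        hupdS s x m i.castSucc hm (by rw [Fin.coe_castSucc]; omega)]
  have hρS : ∀ (s : Fin (H + 1) → S) (x : S) (m : ℕ),
      0 < m → m ≤ H → Function.update s (m : Fin (H + 1)) x 0 = s 0 := by
    intro s x m h0 hm
    exact hupdS s x m 0 hm (by simp; omega)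
  -- Step lemma
  have hstep : ∀ n : ℕ, i.val + 1 ≤ n → n + 1 ≤ H →
      ((Fintype.card S : ℝ) * (Fintype.card A : ℝ)) • F (n + 1) = F n := by
    intro n hin hnH
    -- first marginalize s at index n+1
    have hS1 : ∀ a : Fin H → A,
        (Fintype.card S : ℝ) •
            ∑ s : Fin (H + 1) → S, (ρ (s 0) * ∏ k ∈ Finset.range (n + 1), W s a k) • C s a
          = ∑ s : Fin (H + 1) → S,
              (ρ (s 0) * (∏ k ∈ Finset.range n, W s a k)
                * p (s (n : Fin (H + 1))) (a (n : Fin H))) • C s a := by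
      intro a
      refine margB ((n + 1 : ℕ) : Fin (H + 1)) _ _ ?_ ?_
      · intro s
        have key : ∀ x : S,
            (ρ (Function.update s ((n + 1 : ℕ) : Fin (H + 1)) x 0)
              * ∏ k ∈ Finset.range (n + 1), W (Function.update s ((n + 1 : ℕ) : Fin (H + 1)) x) a k)
              • C (Function.update s ((n + 1 : ℕ) : Fin (H + 1)) x) a
            = P x (s (n : Fin (H + 1))) (a (n : Fin H)) •
                ((ρ (s 0) * (∏ k ∈ Finset.range n, W s a k)
                  * p (s (n : Fin (H + 1))) (a (n : Fin H))) • C s a) := by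
          intro x
          have hlast : W (Function.update s ((n + 1 : ℕ) : Fin (H + 1)) x) a n
              = p (s (n : Fin (H + 1))) (a (n : Fin H))
                * P x (s (n : Fin (H + 1))) (a (n : Fin H)) := by
            simp only [hWdef]
            rw [Function.update_self,
              hupdS s x (n + 1) ((n : ℕ) : Fin (H + 1)) (by omega) (by rw [castS n (by omega)]; omega)]
          rw [Finset.prod_range_succ, hlast, hprodS s a x (n + 1) n (by omega) (by omega),
            hCS s a x (n + 1) (by omega) (by omega), hρS s x (n + 1) (by omega) (by omega)]
          simp only [hCdef, smul_smul]
          congr 1; ring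
        rw [Finset.sum_congr rfl fun x _ => key x, ← Finset.sum_smul, hPsum, one_smul]
      · intro s x
        rw [hρS s x (n + 1) (by omega) (by omega), hprodS s a x (n + 1) n (by omega) (by omega),
          hCS s a x (n + 1) (by omega) (by omega),
          hupdS s x (n + 1) ((n : ℕ) : Fin (H + 1)) (by omega) (by rw [castS n (by omega)]; omega)]
    -- then marginalize a at index n
    have hA1 : ∀ s : Fin (H + 1) → S,
        (Fintype.card A : ℝ) •
            ∑ a : Fin H → A,
              (ρ (s 0) * (∏ k ∈ Finset.range n, W s a k)
                * p (s (n : Fin (H + 1))) (a (n : Fin H))) • C s a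
          = ∑ a : Fin H → A, (ρ (s 0) * ∏ k ∈ Finset.range n, W s a k) • C s a := by
      intro s
      refine margB ((n : ℕ) : Fin H) _ _ ?_ ?_
      · intro a
        have key : ∀ x : A,
            (ρ (s 0) * (∏ k ∈ Finset.range n, W s (Function.update a ((n : ℕ) : Fin H) x) k)
              * p (s (n : Fin (H + 1))) (Function.update a ((n : ℕ) : Fin H) x (n : Fin H)))
              • C s (Function.update a ((n : ℕ) : Fin H) x)
            = p (s (n : Fin (H + 1))) x •
                ((ρ (s 0) * ∏ k ∈ Finset.range n, W s a k) • C s a) := by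
          intro x
          have hCA : C s (Function.update a ((n : ℕ) : Fin H) x) = C s a := by
            simp only [hCdef]
            rw [hupdA a x n i (by omega) (by omega)]
          rw [Function.update_self, hprodA s a x n n le_rfl (by omega), hCA]
          simp only [hCdef, smul_smul]
          congr 1; ring
        rw [Finset.sum_congr rfl fun x _ => key x, ← Finset.sum_smul, hpsum, one_smul]
      · intro a x
        rw [hprodA s a x n n le_rfl (by omega)]
        have hCA : C s (Function.update a ((n : ℕ) : Fin H) x) = C s a := by
          simp only [hCdef]
          rw [hupdA a x n i (by omega) (by omega)]
        rw [hCA]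
    calc ((Fintype.card S : ℝ) * (Fintype.card A : ℝ)) • F (n + 1)
        = (Fintype.card A : ℝ) • ((Fintype.card S : ℝ) • F (n + 1)) := by
          rw [smul_smul, mul_comm]
      _ = (Fintype.card A : ℝ) • ∑ s : Fin (H + 1) → S, ∑ a : Fin H → A,
            (ρ (s 0) * (∏ k ∈ Finset.range n, W s a k)
              * p (s (n : Fin (H + 1))) (a (n : Fin H))) • C s a := by
          congr 1
          simp only [hFdef]
          rw [Finset.sum_comm, Finset.smul_sum]
          rw [Finset.sum_congr rfl fun a _ => hS1 a]
          rw [Finset.sum_comm]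
      _ = F n := by
          simp only [hFdef]
          rw [Finset.smul_sum]
          exact Finset.sum_congr rfl fun s _ => hA1 s
  -- Base case : F (i+1) = 0
  have hbase : F (i.val + 1) = 0 := by
    have hS1 : ∀ a : Fin H → A,
        (Fintype.card S : ℝ) •
            ∑ s : Fin (H + 1) → S, (ρ (s 0) * ∏ k ∈ Finset.range (i.val + 1), W s a k) • C s a
          = ∑ s : Fin (H + 1) → S,
              (ρ (s 0) * (∏ k ∈ Finset.range i.val, W s a k)
                * p (s i.castSucc) (a i)) • C s a := by
      intro a
      refine margB ((i.val + 1 : ℕ) : Fin (H + 1)) _ _ ?_ ?_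
      · intro s
        have key : ∀ x : S,
            (ρ (Function.update s ((i.val + 1 : ℕ) : Fin (H + 1)) x 0)
              * ∏ k ∈ Finset.range (i.val + 1),
                  W (Function.update s ((i.val + 1 : ℕ) : Fin (H + 1)) x) a k)
              • C (Function.update s ((i.val + 1 : ℕ) : Fin (H + 1)) x) a
            = P x (s i.castSucc) (a i) •
                ((ρ (s 0) * (∏ k ∈ Finset.range i.val, W s a k)
                  * p (s i.castSucc) (a i)) • C s a) := by
          intro x
          have hlast : W (Function.update s ((i.val + 1 : ℕ) : Fin (H + 1)) x) a i.val
              = p (s i.castSucc) (a i) * P x (s i.castSucc) (a i) := by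
            simp only [hWdef]
            rw [Function.update_self,
              hupdS s x (i.val + 1) ((i.val : ℕ) : Fin (H + 1)) (by omega)
                (by rw [castS i.val (by omega)]; omega), hiS, hiA]
          rw [Finset.prod_range_succ, hlast,
            hprodS s a x (i.val + 1) i.val (by omega) (by omega),
            hCS s a x (i.val + 1) (by omega) (by omega),
            hρS s x (i.val + 1) (by omega) (by omega)]
          simp only [hCdef, smul_smul]
          congr 1; ring
        rw [Finset.sum_congr rfl fun x _ => key x, ← Finset.sum_smul, hPsum, one_smul]
      · intro s x
        rw [hρS s x (i.val + 1) (by omega) (by omega),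
          hprodS s a x (i.val + 1) i.val (by omega) (by omega),
          hCS s a x (i.val + 1) (by omega) (by omega),
          hupdS s x (i.val + 1) i.castSucc (by omega) (by rw [Fin.coe_castSucc]; omega)]
    have hA0 : ∀ s : Fin (H + 1) → S,
        ∑ a : Fin H → A,
          (ρ (s 0) * (∏ k ∈ Finset.range i.val, W s a k) * p (s i.castSucc) (a i)) • C s a
          = 0 := by
      intro s
      have hcard : (Fintype.card A : ℝ) ≠ 0 := by
        simp [Fintype.card_ne_zero]
      have := margB (E := E) i
        (fun a => (ρ (s 0) * (∏ k ∈ Finset.range i.val, W s a k) * p (s i.castSucc) (a i)) • C s a)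
        (fun _ => 0) ?_ ?_
      · rw [Finset.sum_const, smul_zero] at this
        exact (smul_eq_zero.mp this).resolve_left hcard
      · intro a
        have key : ∀ x : A,
            (ρ (s 0) * (∏ k ∈ Finset.range i.val, W s (Function.update a i x) k)
              * p (s i.castSucc) (Function.update a i x i)) • C s (Function.update a i x)
            = (ρ (s 0) * ∏ k ∈ Finset.range i.val, W s a k) •
                (c s • (p (s i.castSucc) x • L (s i.castSucc) x)) := by
          intro x
          have hprod : ∏ k ∈ Finset.range i.val, W s (Function.update a i x) k
              = ∏ k ∈ Finset.range i.val, W s a k := by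
            refine Finset.prod_congr rfl fun k hk => ?_
            have hk' : k < i.val := Finset.mem_range.mp hk
            simp only [hWdef]
            rw [Function.update_of_ne (show ((k : ℕ) : Fin H) ≠ i by
              intro h; apply_fun Fin.val at h; rw [castA k (by omega)] at h; omega)]
          have hCu : C s (Function.update a i x) = c s • L (s i.castSucc) x := by
            simp only [hCdef]; rw [Function.update_self]
          rw [Function.update_self, hprod, hCu]
          simp only [smul_smul]
          congr 1; ring
        rw [Finset.sum_congr rfl fun x _ => key x, ← Finset.smul_sum, ← Finset.smul_sum,
          hL, smul_zero, smul_zero]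
      · intro a x; rfl
    have hcardS : (Fintype.card S : ℝ) ≠ 0 := by simp [Fintype.card_ne_zero]
    have : (Fintype.card S : ℝ) • F (i.val + 1) = 0 := by
      simp only [hFdef]
      rw [Finset.sum_comm, Finset.smul_sum, Finset.sum_congr rfl fun a _ => hS1 a,
        Finset.sum_comm, Finset.sum_congr rfl fun s _ => hA0 s, Finset.sum_const, smul_zero]
    exact (smul_eq_zero.mp this).resolve_left hcardS
  -- induction up to H
  have hmain : ∀ n : ℕ, i.val + 1 ≤ n → n ≤ H → F n = 0 := by
    intro n hn
    induction n, hn using Nat.le_induction with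
    | base => intro _; exact hbase
    | succ n hn ih =>
      intro hnH
      have h1 := hstep n hn hnH
      rw [ih (by omega)] at h1
      have hcard : ((Fintype.card S : ℝ) * (Fintype.card A : ℝ)) ≠ 0 := by
        simp [Fintype.card_ne_zero]
      exact (smul_eq_zero.mp h1).resolve_left hcard
  have hFH := hmain H (by omega) le_rfl
  simp only [hFdef] at hFH
  rw [← hFH]
  refine Finset.sum_congr rfl fun s _ => Finset.sum_congr rfl fun a _ => ?_
  congr 2
  rw [← Fin.prod_univ_eq_prod_range (fun k => W s a k) H]
  refine Finset.prod_congr rfl fun j _ => ?_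
  simp only [hWdef]
  congr 1
  · congr 1
    · congr 1; ext; rw [castS j.val (by omega), Fin.coe_castSucc]
    · congr 1; exact (Fin.cast_val_eq_self j).symm
  · congr 1
    · congr 1; ext; rw [castS (j.val + 1) (by omega), Fin.val_succ]
    · congr 1; ext; rw [castS j.val (by omega), Fin.coe_castSucc]
    · congr 1; exact (Fin.cast_val_eq_self j).symm



/-- The probability of a trajectory `τ = (s, a)` over horizon `H` under policy
parameters `θ`: `f(θ,τ) = ρ(s₀) · ∏ᵢ π(θ,sᵢ,aᵢ) · ∏ᵢ P(sᵢ₊₁,sᵢ,aᵢ)`. -/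
noncomputable def trajProb {S A : Type*} {d H : ℕ}
    (ρ : S → ℝ) (P : S → S → A → ℝ)
    (π : EuclideanSpace ℝ (Fin d) → S → A → ℝ)
    (θ : EuclideanSpace ℝ (Fin d))
    (τ : (Fin (H + 1) → S) × (Fin H → A)) : ℝ :=
  ρ (τ.1 0) * (∏ i : Fin H, π θ (τ.1 i.castSucc) (τ.2 i))
    * ∏ i : Fin H, P (τ.1 i.succ) (τ.1 i.castSucc) (τ.2 i)

open Fin.NatCast in
/-- The partial trajectory `τ_{0:j} = {(s₀,0),…,(s_j,j)}` of time-augmented states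
(for `j ≤ H`). -/
def trajSet {S : Type*} [DecidableEq S] {H : ℕ}
    (s : Fin (H + 1) → S) (j : ℕ) : Finset (S × ℕ) :=
  (Finset.range (j + 1)).image (fun k => (s (k : ℕ), k))

lemma trajSet_update {S : Type*} [DecidableEq S] {H : ℕ}
    (s : Fin (H + 1) → S) (j : Fin (H + 1)) (x : S) (m : ℕ) (hm : m < j.val) :
    trajSet (Function.update s j x) m = trajSet s m := by
  unfold trajSet
  refine Finset.image_congr ?_
  intro k hk
  simp only [Finset.coe_range, Set.mem_Iio] at hk
  have hk' : k < H + 1 := by omega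
  have hne : ((k : Fin (H + 1))) ≠ j := by
    intro h
    apply_fun Fin.val at h
    rw [Fin.val_cast_of_lt hk'] at h
    omega
  simp [Function.update_of_ne hne]

/-- **Policy-gradient theorem for submodular MDPs (Theorem 3 of the paper).**
With `J(θ) = ∑_τ f(θ,τ)·R(τ_{0:H})`, we have
`∇J(θ) = ∑_τ f(θ,τ) • ∑ᵢ (∑_{j=i}^{H-1} (R(τ_{0:j+1}) − R(τ_{0:j})) + R({(s₀,0)}))
          • ∇_θ log π(θ,sᵢ,aᵢ)`. -/
theorem stmt_6 {S A : Type*} [Fintype S] [DecidableEq S] [Fintype A] {H d : ℕ}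
    (hH : 0 < H) (hd : 0 < d)
    (ρ : S → ℝ) (hρ : ∀ s, 0 ≤ ρ s) (hρsum : ∑ s : S, ρ s = 1)
    (P : S → S → A → ℝ) (hPnonneg : ∀ s' s a, 0 ≤ P s' s a)
    (hPsum : ∀ (s : S) (a : A), ∑ s' : S, P s' s a = 1)
    (π : EuclideanSpace ℝ (Fin d) → S → A → ℝ)
    (hdiff : ∀ (s : S) (a : A), Differentiable ℝ (fun θ => π θ s a))
    (hpos : ∀ (θ : EuclideanSpace ℝ (Fin d)) (s : S) (a : A), 0 < π θ s a)
    (hsum : ∀ (θ : EuclideanSpace ℝ (Fin d)) (s : S), ∑ a : A, π θ s a = 1)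
    (R : Finset (S × ℕ) → ℝ)
    (J : EuclideanSpace ℝ (Fin d) → ℝ)
    (hJ : ∀ θ, J θ = ∑ τ : (Fin (H + 1) → S) × (Fin H → A),
      trajProb ρ P π θ τ * R (trajSet τ.1 H))
    (θ : EuclideanSpace ℝ (Fin d)) :
    gradient J θ
      = ∑ τ : (Fin (H + 1) → S) × (Fin H → A),
          trajProb ρ P π θ τ •
            ∑ i : Fin H,
              ((∑ j ∈ Finset.Ico i.val H, (R (trajSet τ.1 (j + 1)) - R (trajSet τ.1 j)))
                  + R {(τ.1 0, 0)}) •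
                gradient (fun θ' => Real.log (π θ' (τ.1 i.castSucc) (τ.2 i))) θ := by
  classical
  have hSne : Nonempty S := by
    by_contra h
    rw [not_nonempty_iff] at h
    rw [Finset.univ_eq_empty, Finset.sum_empty] at hρsum
    exact one_ne_zero hρsum.symm
  have hAne : Nonempty A := by
    by_contra h
    rw [not_nonempty_iff] at h
    have := hsum θ (Classical.arbitrary S)
    rw [Finset.univ_eq_empty, Finset.sum_empty] at this
    exact one_ne_zero this.symm
  -- the score-function identity
  have key_zero : ∀ s : S,
      ∑ a : A, π θ s a • gradient (fun θ' => Real.log (π θ' s a)) θ = 0 := by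
    intro s
    have hgl : ∀ a : A, π θ s a • gradient (fun θ' => Real.log (π θ' s a)) θ
        = gradient (fun θ' => π θ' s a) θ := by
      intro a
      unfold gradient
      rw [((hdiff s a θ).hasFDerivAt.log (hpos θ s a).ne').fderiv, map_smul, smul_smul,
        mul_inv_cancel₀ (hpos θ s a).ne', one_smul]
    simp only [hgl]
    unfold gradient
    rw [← map_sum, ← fderiv_fun_sum (fun a _ => hdiff s a θ)]
    have : (fun θ' => ∑ a : A, π θ' s a) = fun _ => (1 : ℝ) := funext fun θ' => hsum θ' s
    rw [this, fderiv_const_apply]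
    simp
  -- derivative of the trajectory probability
  have hgradtraj : ∀ τ : (Fin (H + 1) → S) × (Fin H → A),
      HasFDerivAt (fun θ' => trajProb ρ P π θ' τ)
        (trajProb ρ P π θ τ •
          ∑ i : Fin H, fderiv ℝ (fun θ' => Real.log (π θ' (τ.1 i.castSucc) (τ.2 i))) θ) θ := by
    intro τ
    have hfun : (fun θ' => trajProb ρ P π θ' τ)
        = fun θ' => (ρ (τ.1 0) * ∏ i : Fin H, P (τ.1 i.succ) (τ.1 i.castSucc) (τ.2 i))
            * Real.exp (∑ i : Fin H, Real.log (π θ' (τ.1 i.castSucc) (τ.2 i))) := by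
      funext θ'
      rw [Real.exp_sum]
      have : ∀ i : Fin H, Real.exp (Real.log (π θ' (τ.1 i.castSucc) (τ.2 i)))
          = π θ' (τ.1 i.castSucc) (τ.2 i) := fun i => Real.exp_log (hpos θ' _ _)
      rw [Finset.prod_congr rfl fun i _ => this i]
      unfold trajProb; ring
    have hsl : HasFDerivAt (fun θ' => ∑ i : Fin H, Real.log (π θ' (τ.1 i.castSucc) (τ.2 i)))
        (∑ i : Fin H, fderiv ℝ (fun θ' => Real.log (π θ' (τ.1 i.castSucc) (τ.2 i))) θ) θ :=
      HasFDerivAt.fun_sum fun i _ =>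
        (((hdiff _ _) θ).log (hpos θ _ _).ne').hasFDerivAt
    have hd := (hsl.exp).const_mul
      (ρ (τ.1 0) * ∏ i : Fin H, P (τ.1 i.succ) (τ.1 i.castSucc) (τ.2 i))
    rw [hfun]
    refine hd.congr_fderiv (Eq.symm ?_)
    rw [smul_smul, Real.exp_sum]
    have : ∀ i : Fin H, Real.exp (Real.log (π θ (τ.1 i.castSucc) (τ.2 i)))
        = π θ (τ.1 i.castSucc) (τ.2 i) := fun i => Real.exp_log (hpos θ _ _)
    rw [Finset.prod_congr rfl fun i _ => this i]
    unfold trajProb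
    ring_nf
  -- gradient of J
  have hJfun : J = fun θ' => ∑ τ : (Fin (H + 1) → S) × (Fin H → A),
      trajProb ρ P π θ' τ * R (trajSet τ.1 H) := funext hJ
  have hJfd : HasFDerivAt J
      (∑ τ : (Fin (H + 1) → S) × (Fin H → A), R (trajSet τ.1 H) •
        (trajProb ρ P π θ τ •
          ∑ i : Fin H, fderiv ℝ (fun θ' => Real.log (π θ' (τ.1 i.castSucc) (τ.2 i))) θ)) θ := by
    rw [hJfun]
    exact HasFDerivAt.fun_sum fun τ _ => (hgradtraj τ).mul_const _
  have hgJ : gradient J θ = ∑ τ : (Fin (H + 1) → S) × (Fin H → A),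
      R (trajSet τ.1 H) • (trajProb ρ P π θ τ •
        ∑ i : Fin H, gradient (fun θ' => Real.log (π θ' (τ.1 i.castSucc) (τ.2 i))) θ) := by
    unfold gradient
    rw [hJfd.fderiv, map_sum]
    refine Finset.sum_congr rfl fun τ _ => ?_
    rw [map_smul, map_smul, map_sum]
  -- telescoping of the rewards
  have htel : ∀ (s : Fin (H + 1) → S) (i : Fin H),
      (∑ j ∈ Finset.Ico i.val H, (R (trajSet s (j + 1)) - R (trajSet s j))) + R {(s 0, 0)}
        = R (trajSet s H) + (R (trajSet s 0) - R (trajSet s i.val)) := by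
    intro s i
    have h0 : ({((s 0 : S), (0 : ℕ))} : Finset (S × ℕ)) = trajSet s 0 := by
      unfold trajSet
      rw [Finset.range_one, Finset.image_singleton]
      norm_num
    rw [Finset.sum_Ico_eq_sub _ (le_of_lt i.isLt),
      Finset.sum_range_sub (fun j => R (trajSet s j)),
      Finset.sum_range_sub (fun j => R (trajSet s j)), h0]
    ring
  -- the vanishing correction terms
  have hz : ∀ i : Fin H, ∑ τ : (Fin (H + 1) → S) × (Fin H → A),
      trajProb ρ P π θ τ • ((R (trajSet τ.1 0) - R (trajSet τ.1 i.val)) •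
        gradient (fun θ' => Real.log (π θ' (τ.1 i.castSucc) (τ.2 i))) θ) = 0 := by
    intro i
    have hc : ∀ (s : Fin (H + 1) → S) (j : Fin (H + 1)) (x : S), i.val < j.val →
        (fun s => R (trajSet s 0) - R (trajSet s i.val)) (Function.update s j x)
          = (fun s => R (trajSet s 0) - R (trajSet s i.val)) s := by
      intro s j x hij
      simp only
      rw [trajSet_update s j x 0 (by omega), trajSet_update s j x i.val (by omega)]
    have h := zero_lemma hH ρ P (fun s a => π θ s a) hPsum (fun s => hsum θ s)
      (fun s a => gradient (fun θ' => Real.log (π θ' s a)) θ) key_zero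
      (fun s => R (trajSet s 0) - R (trajSet s i.val)) i hc
    rw [Fintype.sum_prod_type, ← h]
    refine Finset.sum_congr rfl fun s _ => Finset.sum_congr rfl fun a _ => ?_
    congr 1
    show trajProb ρ P π θ (s, a) = _
    unfold trajProb
    rw [mul_assoc, ← Finset.prod_mul_distrib]
  -- final assembly
  have hmain : ∀ τ : (Fin (H + 1) → S) × (Fin H → A),
      trajProb ρ P π θ τ •
        ∑ i : Fin H,
          ((∑ j ∈ Finset.Ico i.val H, (R (trajSet τ.1 (j + 1)) - R (trajSet τ.1 j)))
              + R {(τ.1 0, 0)}) •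
            gradient (fun θ' => Real.log (π θ' (τ.1 i.castSucc) (τ.2 i))) θ
      = R (trajSet τ.1 H) • (trajProb ρ P π θ τ •
          ∑ i : Fin H, gradient (fun θ' => Real.log (π θ' (τ.1 i.castSucc) (τ.2 i))) θ)
        + ∑ i : Fin H, trajProb ρ P π θ τ • ((R (trajSet τ.1 0) - R (trajSet τ.1 i.val)) •
            gradient (fun θ' => Real.log (π θ' (τ.1 i.castSucc) (τ.2 i))) θ) := by
    intro τ
    simp only [htel τ.1, add_smul]
    rw [Finset.sum_add_distrib, smul_add]
    congr 1
    · rw [smul_comm]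
      congr 1
      rw [Finset.smul_sum]
    · rw [Finset.smul_sum]
  rw [hgJ, Finset.sum_congr rfl fun τ _ => hmain τ, Finset.sum_add_distrib]
  have hz2 : ∑ τ : (Fin (H + 1) → S) × (Fin H → A), ∑ i : Fin H,
      trajProb ρ P π θ τ • ((R (trajSet τ.1 0) - R (trajSet τ.1 i.val)) •
        gradient (fun θ' => Real.log (π θ' (τ.1 i.castSucc) (τ.2 i))) θ) = 0 := by
    rw [Finset.sum_comm]
    exact Finset.sum_eq_zero fun i _ => hz i
  rw [hz2, add_zero]
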